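/- Let λ > 0, γ > 0, σ > 0 and δ ≠ 0 be constants, set l = (3λδ²/(2γσ²))^{1/3}, and define g : ℝ → ℝ by g(x) = (γσ²/(3δ²))·(x³ − 3l²·x) for |x| ≤ l and g(x) = −λ·sgn(x) for |x| > l. Then: (i) g is an odd, decreasing function; (ii) (1/2)·δ²·g''(x) = γσ²·x for every x ∈ (−l, l); (iii) g is differentiable on all of ℝ, its derivative g' is continuous on ℝ, and g'(l) = g'(−l) = 0; (iv) for every x ∈ [0, l], one has 0 ≥ g(x) ≥ g(l) = −λ. -/

import Mathlib

open Real Filter Asymptotics Topology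

/-- Lemma 7.1: properties of the explicit function `g` associated with the equilibrium under
proportional transaction costs `λ`, where `l = (3λδ²/(2γσ²))^{1/3}`. -/
theorem stmt17 (lam γ σ δ : ℝ) (hlam : 0 < lam) (hγ : 0 < γ) (hσ : 0 < σ) (hδ : δ ≠ 0)
    (l : ℝ) (hl : l = (3 * lam * δ ^ 2 / (2 * γ * σ ^ 2)) ^ ((1 : ℝ) / 3))
    (g : ℝ → ℝ)
    (hg : ∀ x : ℝ, g x =
      if |x| ≤ l then γ * σ ^ 2 / (3 * δ ^ 2) * (x ^ 3 - 3 * l ^ 2 * x)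
      else -lam * Real.sign x) :
    -- (i) `g` is odd and decreasing
    (∀ x : ℝ, g (-x) = -g x) ∧ Antitone g ∧
    -- (ii) `(1/2)·δ²·g''(x) = γσ²·x` on `(−l, l)`
    (∀ x ∈ Set.Ioo (-l) l, 1 / 2 * δ ^ 2 * deriv (deriv g) x = γ * σ ^ 2 * x) ∧
    -- (iii) `g` is differentiable, `g'` is continuous, and `g'(±l) = 0`
    Differentiable ℝ g ∧ Continuous (deriv g) ∧ deriv g l = 0 ∧ deriv g (-l) = 0 ∧
    -- (iv) `0 ≥ g(x) ≥ g(l) = −λ` on `[0, l]`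
    (∀ x ∈ Set.Icc 0 l, g x ≤ 0 ∧ g l ≤ g x) ∧ g l = -lam := by
  have hδ2 : (0:ℝ) < δ ^ 2 := by positivity
  set c : ℝ := γ * σ ^ 2 / (3 * δ ^ 2) with hc_def
  have hc : 0 < c := by positivity
  have ha : (0:ℝ) < 3 * lam * δ ^ 2 / (2 * γ * σ ^ 2) := by positivity
  have hl0 : 0 < l := by rw [hl]; exact Real.rpow_pos_of_pos ha _
  have hl3 : l ^ 3 = 3 * lam * δ ^ 2 / (2 * γ * σ ^ 2) := by
    rw [hl, ← Real.rpow_natCast (_ ^ _) 3, ← Real.rpow_mul ha.le]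
    norm_num
  have hkey : 2 * c * l ^ 3 = lam := by
    rw [hl3, hc_def]
    field_simp
  set F : ℝ → ℝ := fun t => c * (t ^ 3 - 3 * l ^ 2 * t) with hF_def
  set cl : ℝ → ℝ := fun x => max (-l) (min x l) with hcl_def
  have hcl_mem : ∀ x, -l ≤ cl x ∧ cl x ≤ l := fun x =>
    ⟨le_max_left _ _, max_le (by linarith) (min_le_right _ _)⟩
  have hFl : F l = -lam := by simp only [hF_def]; nlinarith [hkey]
  have hFnl : F (-l) = lam := by simp only [hF_def]; nlinarith [hkey]
  have hcl_eq : ∀ x : ℝ, |x| ≤ l → cl x = x := by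
    intro x hx
    rw [abs_le] at hx
    simp [hcl_def, min_eq_left hx.2, max_eq_right hx.1]
  have hgF : ∀ x, g x = F (cl x) := by
    intro x
    rw [hg]
    by_cases hx : |x| ≤ l
    · rw [if_pos hx, hcl_eq x hx]
    · rw [if_neg hx]
      push_neg at hx
      rw [lt_abs] at hx
      rcases hx with hx | hx
      · have hclx : cl x = l := by
          simp [hcl_def, min_eq_right hx.le, max_eq_right (by linarith : -l ≤ l)]
        rw [hclx, hFl, Real.sign_of_pos (by linarith), mul_one]
      · have hmin : min x l = x := min_eq_left (by linarith)
        have hclx : cl x = -l := by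
          simp only [hcl_def, hmin]
          exact max_eq_left (by linarith)
        rw [hclx, hFnl, Real.sign_of_neg (by linarith)]
        ring
  have hcl_cont : Continuous cl := continuous_const.max (continuous_id.min continuous_const)
  have hF' : ∀ t : ℝ, HasDerivAt F (3 * c * (t ^ 2 - l ^ 2)) t := by
    intro t
    have h := (((hasDerivAt_pow 3 t).sub
      ((hasDerivAt_id t).const_mul (3 * l ^ 2))).const_mul c)
    refine h.congr_deriv ?_
    rw [show (3:ℕ) - 1 = 2 from rfl]
    push_cast
    ring
  have hLip : ∀ x y : ℝ, |cl x - cl y| ≤ |x - y| := by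
    intro x y
    simp only [hcl_def]
    calc |max (-l) (min x l) - max (-l) (min y l)|
        ≤ max |(-l) - (-l)| |min x l - min y l| := abs_max_sub_max_le_max _ _ _ _
      _ ≤ |x - y| := by
          refine max_le (by simp) ?_
          calc |min x l - min y l| ≤ max |x - y| |l - l| := abs_min_sub_min_le_max _ _ _ _
            _ ≤ |x - y| := by simp
  -- derivative at the boundary points
  have hbd : ∀ x0 : ℝ, x0 = l ∨ x0 = -l → HasDerivAt g 0 x0 := by
    intro x0 hx0
    have hax0 : |x0| ≤ l := by
      rcases hx0 with h | h <;> rw [h] <;> simp [abs_of_nonneg hl0.le, abs_of_nonpos, hl0.le]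
    have hclx0 : cl x0 = x0 := hcl_eq x0 hax0
    have hF0 : HasDerivAt F 0 x0 := by
      have h := hF' x0
      have : 3 * c * (x0 ^ 2 - l ^ 2) = 0 := by rcases hx0 with h | h <;> rw [h] <;> ring
      rwa [this] at h
    have h1 : (fun t => F t - F x0) =o[𝓝 x0] fun t => t - x0 := by
      have := hasDerivAt_iff_isLittleO.1 hF0
      simpa using this
    have htend : Tendsto cl (𝓝 x0) (𝓝 x0) := by
      have := hcl_cont.tendsto x0
      rwa [hclx0] at this
    have h2 : (fun y => F (cl y) - F x0) =o[𝓝 x0] fun y => cl y - x0 :=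
      h1.comp_tendsto htend
    have h3 : (fun y => cl y - x0) =O[𝓝 x0] fun y => y - x0 := by
      rw [isBigO_iff]
      refine ⟨1, Filter.Eventually.of_forall fun y => ?_⟩
      rw [one_mul]
      calc ‖cl y - x0‖ = |cl y - cl x0| := by rw [hclx0]; rfl
        _ ≤ |y - x0| := hLip y x0
    have h4 : (fun y => g y - g x0) =o[𝓝 x0] fun y => y - x0 := by
      have := h2.trans_isBigO h3
      refine this.congr' (Filter.Eventually.of_forall fun y => ?_) EventuallyEq.rfl
      show F (cl y) - F x0 = g y - g x0
      rw [hgF y, hgF x0, hclx0]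
    rw [hasDerivAt_iff_isLittleO]
    simpa using h4
  set D : ℝ → ℝ := fun x => 3 * c * ((cl x) ^ 2 - l ^ 2) with hD_def
  have hder : ∀ x, HasDerivAt g (D x) x := by
    intro x
    rcases lt_trichotomy (|x|) l with hx | hx | hx
    · have hx' : cl x = x := hcl_eq x hx.le
      have hev : g =ᶠ[𝓝 x] F := by
        have hop : IsOpen {y : ℝ | |y| < l} := isOpen_lt continuous_abs continuous_const
        filter_upwards [hop.mem_nhds hx] with y hy
        rw [hgF y, hcl_eq y (le_of_lt hy)]
      have h := (hF' x).congr_of_eventuallyEq hev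
      simp only [hD_def, hx']
      exact h
    · have : x = l ∨ x = -l := by
        rcases abs_eq hl0.le |>.1 hx with h | h
        · exact Or.inl h
        · exact Or.inr h
      have h0 := hbd x this
      have hD0 : D x = 0 := by
        simp only [hD_def]
        have hclx : cl x = x := hcl_eq x hx.le
        rcases this with h | h <;> rw [hclx, h] <;> ring
      rwa [hD0]
    · rw [lt_abs] at hx
      rcases hx with hx | hx
      · have hclx : cl x = l := by
          simp [hcl_def, min_eq_right hx.le, max_eq_right (by linarith : -l ≤ l)]
        have hev : g =ᶠ[𝓝 x] fun _ => -lam := by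
          have hop : IsOpen {y : ℝ | l < y} := isOpen_lt continuous_const continuous_id
          filter_upwards [hop.mem_nhds hx] with y hy
          rw [hg y, if_neg (by rw [not_le, lt_abs]; exact Or.inl hy),
            Real.sign_of_pos (by linarith : (0:ℝ) < y), mul_one]
        have h := (hasDerivAt_const x (-lam)).congr_of_eventuallyEq hev
        have hD0 : D x = 0 := by simp only [hD_def]; rw [hclx]; ring
        rwa [hD0]
      · have hmin : min x l = x := min_eq_left (by linarith)
        have hclx : cl x = -l := by
          simp only [hcl_def, hmin]
          exact max_eq_left (by linarith)
        have hev : g =ᶠ[𝓝 x] fun _ => lam := by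
          have hop : IsOpen {y : ℝ | y < -l} := isOpen_lt continuous_id continuous_const
          filter_upwards [hop.mem_nhds (show x < -l by linarith)] with y hy
          rw [hg y, if_neg (by rw [not_le, lt_abs]; exact Or.inr (by linarith [hy])),
            Real.sign_of_neg (by linarith [hy] : y < 0)]
          ring
        have h := (hasDerivAt_const x lam).congr_of_eventuallyEq hev
        have hD0 : D x = 0 := by simp only [hD_def]; rw [hclx]; ring
        rwa [hD0]
  have hdiff : Differentiable ℝ g := fun x => (hder x).differentiableAt
  have hderiv_eq : deriv g = D := funext fun x => (hder x).deriv
  have hDcont : Continuous D := by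
    simp only [hD_def]
    exact continuous_const.mul ((hcl_cont.pow 2).sub continuous_const)
  have hgl : g l = -lam := by
    rw [hgF l, hcl_eq l (by rw [abs_of_nonneg hl0.le])]
    exact hFl
  have hg0 : g 0 = 0 := by
    rw [hgF 0, hcl_eq 0 (by simp [hl0.le]), hF_def]
    simp
  have hant : Antitone g := by
    refine antitone_of_deriv_nonpos hdiff fun x => ?_
    rw [hderiv_eq]
    simp only [hD_def]
    have h1 := (hcl_mem x).1
    have h2 := (hcl_mem x).2
    have h3 : (cl x) ^ 2 ≤ l ^ 2 := sq_le_sq' h1 h2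
    nlinarith
  refine ⟨?_, hant, ?_, hdiff, ?_, ?_, ?_, ?_, hgl⟩
  · intro x
    rw [hg x, hg (-x), abs_neg]
    by_cases hx : |x| ≤ l
    · rw [if_pos hx, if_pos hx]; ring
    · rw [if_neg hx, if_neg hx, Real.sign_neg]; ring
  · intro x hx
    obtain ⟨hx1, hx2⟩ := hx
    rw [hderiv_eq]
    have hev : D =ᶠ[𝓝 x] fun y => 3 * c * (y ^ 2 - l ^ 2) := by
      have hop : IsOpen {y : ℝ | |y| < l} := isOpen_lt continuous_abs continuous_const
      filter_upwards [hop.mem_nhds (by rw [Set.mem_setOf_eq, abs_lt]; exact ⟨hx1, hx2⟩)] with y hy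
      simp only [hD_def]
      rw [hcl_eq y (le_of_lt hy)]
    have hD' : HasDerivAt D (3 * c * (2 * x)) x := by
      have h : HasDerivAt (fun y : ℝ => 3 * c * (y ^ 2 - l ^ 2)) (3 * c * (2 * x)) x := by
        have := (((hasDerivAt_pow 2 x).sub_const (l ^ 2)).const_mul (3 * c))
        refine this.congr_deriv ?_
        rw [show (2:ℕ) - 1 = 1 from rfl]
        push_cast
        ring
      exact h.congr_of_eventuallyEq hev
    rw [hD'.deriv, hc_def]
    field_simp
  · rw [hderiv_eq]; exact hDcont
  · rw [hderiv_eq]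
    simp only [hD_def]
    rw [hcl_eq l (by rw [abs_of_nonneg hl0.le])]
    ring
  · rw [hderiv_eq]
    simp only [hD_def]
    rw [hcl_eq (-l) (by rw [abs_neg, abs_of_nonneg hl0.le])]
    ring
  · intro x hx
    constructor
    · calc g x ≤ g 0 := hant hx.1
        _ = 0 := hg0
    · exact hant hx.2
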